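/- Let α ∈ [3/4, 1], δ ∈ (0, 1], ε > 0, and let P ≥ 1 be a real number such that A₁ := P^{(1−α)/2} and A₂ := P^{1−α} are positive integers. Set Q_max = P^{(α/3−ε)/2} and β = δ·P^{−(8α/3−2)/2}. Define B ⊆ (1,4]³ as the set of triples (g₀, g₁, g₂) ∈ (1,4]³ for which there exist integers q₀, q₁, q₂, not all zero, with |q₀| ≤ 2Q_max, |q₁| ≤ 4Q_max, |q₂| ≤ 2Q_max and |g₀q₀ + A₁g₁q₁ + A₂g₂q₂| < β. Then the three-dimensional Lebesgue measure of B is at most 129024·δ·P^{−ε/2}. -/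

import Mathlib

open MeasureTheory Real

lemma outage_toNat_le_max (m : ℤ) : ((m.toNat : ℝ)) ≤ max (m : ℝ) 0 := by
  rcases le_or_gt 0 m with h | h
  · have h2 : ((m.toNat : ℝ)) = (m : ℝ) := by exact_mod_cast Int.toNat_of_nonneg h
    rw [h2]; exact le_max_left _ _
  · rw [Int.toNat_of_nonpos h.le]; simp

set_option maxHeartbeats 1000000 in
lemma outage_slice_bound (A' b c : ℝ) (hA : 1 ≤ A') (hb0 : 0 < b) (hb1 : b ≤ 1) :
    volume {z : ℝ | z ∈ Set.Ioc (1:ℝ) 4 ∧ ∃ q : ℤ, q ≠ 0 ∧ |c + A' * z * q| < b} ≤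
      ENNReal.ofReal (40 * b / A') := by
  have hA0 : (0:ℝ) < A' := by linarith
  set U : ℝ := (|c| + b) / A' with hU
  set L : ℝ := (|c| - b) / (4 * A') with hL
  set uf : ℤ := ⌊U⌋ with huf
  set lf : ℤ := max ⌊L⌋ 0 with hlf
  set T : Finset ℤ := (Finset.Ioc lf uf) ∪ (Finset.Ico (-uf) (-lf)) with hT
  have hlf0 : (0:ℤ) ≤ lf := le_max_right _ _
  have hlf0' : (0:ℝ) ≤ (lf:ℝ) := by exact_mod_cast hlf0
  have hufU : (uf:ℝ) ≤ U := Int.floor_le U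
  have hlfL : L < (lf:ℝ) + 1 := by
    have h1 : L < (⌊L⌋:ℝ) + 1 := Int.lt_floor_add_one L
    have h2 : (⌊L⌋:ℝ) ≤ (lf:ℝ) := by exact_mod_cast le_max_left _ _
    linarith
  have hlfL' : L - 1 ≤ (lf:ℝ) := by linarith
  have hlfpos : (0:ℝ) < A' * ((lf:ℝ) + 1) := by nlinarith
  -- membership facts for T
  have hmemT : ∀ q ∈ T, ((lf:ℝ) + 1 ≤ |(q:ℝ)| ∧ |(q:ℝ)| ≤ (uf:ℝ)) := by
    intro q hq
    rcases Finset.mem_union.mp hq with h | h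
    · obtain ⟨h1, h2⟩ := Finset.mem_Ioc.mp h
      have hq0 : (0:ℤ) < q := lt_of_le_of_lt hlf0 h1
      rw [abs_of_pos (by exact_mod_cast hq0 : (0:ℝ) < (q:ℝ))]
      constructor
      · exact_mod_cast h1
      · exact_mod_cast h2
    · obtain ⟨h1, h2⟩ := Finset.mem_Ico.mp h
      have hq0 : q < 0 := lt_of_lt_of_le h2 (by exact_mod_cast neg_nonpos.mpr hlf0)
      rw [abs_of_neg (by exact_mod_cast hq0 : (q:ℝ) < 0)]
      constructor
      · have h3 : lf + 1 ≤ -q := by omega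
        have h4 : ((lf:ℝ) + 1) ≤ -(q:ℝ) := by exact_mod_cast h3
        linarith
      · have h3 : -q ≤ uf := by omega
        have h4 : (-(q:ℝ)) ≤ (uf:ℝ) := by exact_mod_cast h3
        linarith
  -- inclusion into a union of balls
  have hsub : {z : ℝ | z ∈ Set.Ioc (1:ℝ) 4 ∧ ∃ q : ℤ, q ≠ 0 ∧ |c + A' * z * q| < b}
      ⊆ ⋃ q ∈ T, Metric.ball (-c / (A' * q)) (b / (A' * |(q:ℝ)|)) := by
    rintro z ⟨hz, q, hq0, habs⟩
    have h1z : 1 < z := hz.1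
    have h4z : z ≤ 4 := hz.2
    have hzq : |(q:ℝ)| ≥ 1 := by exact_mod_cast Int.one_le_abs hq0
    have hqR : ((q:ℝ)) ≠ 0 := Int.cast_ne_zero.mpr hq0
    have habsmul : |A' * z * (q:ℝ)| = A' * z * |(q:ℝ)| := by
      rw [abs_mul, abs_of_pos (by nlinarith : (0:ℝ) < A' * z)]
    have key1 : A' * z * |(q:ℝ)| < |c| + b := by
      have e : A' * z * (q:ℝ) = (c + A' * z * q) + (-c) := by ring
      have k := abs_add_le (c + A' * z * (q:ℝ)) (-c)
      rw [← e, abs_neg, habsmul] at k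
      linarith
    have key2 : |c| - b < 4 * (A' * |(q:ℝ)|) := by
      have e : c = (c + A' * z * q) + (-(A' * z * q)) := by ring
      have k := abs_add_le (c + A' * z * (q:ℝ)) (-(A' * z * (q:ℝ)))
      rw [← e, abs_neg, habsmul] at k
      nlinarith [abs_nonneg (q:ℝ), mul_nonneg (sub_nonneg.mpr h4z)
        (mul_nonneg hA0.le (abs_nonneg (q:ℝ)))]
    -- q ∈ T
    have hqU : |q| ≤ uf := by
      rw [huf]
      apply Int.le_floor.mpr
      rw [hU, le_div_iff₀ hA0]
      push_cast
      nlinarith [mul_nonneg (mul_nonneg hA0.le (abs_nonneg (q:ℝ))) (sub_nonneg.mpr h1z.le)]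
    have hqL : lf < |q| := by
      rw [hlf, max_lt_iff]
      refine ⟨Int.floor_lt.mpr ?_, abs_pos.mpr hq0⟩
      rw [hL, div_lt_iff₀ (by linarith : (0:ℝ) < 4 * A')]
      push_cast
      nlinarith
    have hqT : q ∈ T := by
      rcases lt_or_gt_of_ne hq0 with h | h
      · rw [abs_of_neg h] at hqU hqL
        apply Finset.mem_union_right
        rw [Finset.mem_Ico]; omega
      · rw [abs_of_pos h] at hqU hqL
        apply Finset.mem_union_left
        rw [Finset.mem_Ioc]; exact ⟨hqL, hqU⟩
    refine Set.mem_biUnion hqT ?_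
    rw [Metric.mem_ball, Real.dist_eq]
    have haq : A' * (q:ℝ) ≠ 0 := mul_ne_zero (ne_of_gt hA0) hqR
    have e : c + A' * z * q = (A' * q) * (z - (-c / (A' * q))) := by field_simp; ring
    rw [e, abs_mul] at habs
    have h1 : |A' * (q:ℝ)| = A' * |(q:ℝ)| := by rw [abs_mul, abs_of_pos hA0]
    rw [h1] at habs
    have hpos : 0 < A' * |(q:ℝ)| := by positivity
    exact (lt_div_iff₀' hpos).mpr (by linarith [habs])
  refine le_trans (measure_mono hsub) ?_
  refine le_trans (measure_biUnion_finset_le T _) ?_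
  have hball : ∀ q ∈ T, volume (Metric.ball (-c / (A' * (q:ℝ))) (b / (A' * |(q:ℝ)|)))
      = ENNReal.ofReal (2 * (b / (A' * |(q:ℝ)|))) := fun q _ => Real.volume_ball _ _
  rw [Finset.sum_congr rfl hball, ← ENNReal.ofReal_sum_of_nonneg (by intro i _; positivity)]
  apply ENNReal.ofReal_le_ofReal
  -- now a real inequality
  rcases Finset.eq_empty_or_nonempty T with hTe | ⟨qw, hqw⟩
  · rw [hTe, Finset.sum_empty]; positivity
  -- T nonempty
  have hAlf : A' * ((lf:ℝ) + 1) ≤ |c| + b := by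
    obtain ⟨hw1, hw2⟩ := hmemT qw hqw
    have hwU : |(qw:ℝ)| ≤ U := hw2.trans hufU
    have h1 : A' * ((lf:ℝ) + 1) ≤ A' * |(qw:ℝ)| :=
      mul_le_mul_of_nonneg_left hw1 hA0.le
    have h2 : A' * |(qw:ℝ)| ≤ A' * U := mul_le_mul_of_nonneg_left hwU hA0.le
    have h3 : A' * U = |c| + b := by rw [hU]; field_simp
    linarith
  have hsum : ∑ q ∈ T, 2 * (b / (A' * |(q:ℝ)|)) ≤
      (T.card : ℝ) * (2 * (b / (A' * ((lf:ℝ) + 1)))) := by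
    have := Finset.sum_le_card_nsmul T (fun q => 2 * (b / (A' * |(q:ℝ)|)))
      (2 * (b / (A' * ((lf:ℝ) + 1)))) ?_
    · rwa [nsmul_eq_mul] at this
    · intro q hq
      obtain ⟨h1, _⟩ := hmemT q hq
      have h5 : b / (A' * |(q:ℝ)|) ≤ b / (A' * ((lf:ℝ) + 1)) := by
        rw [div_le_div_iff₀ (by nlinarith : (0:ℝ) < A' * |(q:ℝ)|) hlfpos]
        nlinarith [mul_nonneg (mul_nonneg hb0.le hA0.le) (sub_nonneg.mpr h1)]
      linarith
  have hcard : (T.card : ℝ) ≤ 2 * max ((uf:ℝ) - (lf:ℝ)) 0 := by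
    have h1 : T.card ≤ (Finset.Ioc lf uf).card + (Finset.Ico (-uf) (-lf)).card :=
      Finset.card_union_le _ _
    rw [Int.card_Ioc, Int.card_Ico] at h1
    have he : -lf - -uf = uf - lf := by ring
    rw [he] at h1
    have h2 : (T.card : ℝ) ≤ 2 * (((uf - lf).toNat : ℕ) : ℝ) := by
      have : T.card ≤ 2 * (uf - lf).toNat := by omega
      exact_mod_cast this
    have h3 := outage_toNat_le_max (uf - lf)
    have h4 : ((uf - lf : ℤ) : ℝ) = (uf:ℝ) - (lf:ℝ) := by push_cast; ring
    rw [h4] at h3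
    linarith
  refine le_trans hsum ?_
  have hcge : 0 ≤ |c| := abs_nonneg c
  rcases le_or_gt |c| (9 * b) with hc | hc
  · -- small |c|
    have hterm : 2 * (b / (A' * ((lf:ℝ) + 1))) ≤ 2 * (b / A') := by
      have h9 : b / (A' * ((lf:ℝ) + 1)) ≤ b / A' := by
        rw [div_le_div_iff₀ hlfpos hA0]
        nlinarith [mul_nonneg (mul_nonneg hb0.le hA0.le) hlf0']
      linarith
    have hcard2 : (T.card : ℝ) ≤ 2 * U := by
      refine hcard.trans ?_
      have hU0 : (0:ℝ) ≤ U := by positivity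
      have : max ((uf:ℝ) - (lf:ℝ)) 0 ≤ U := max_le (by linarith) hU0
      linarith
    calc (T.card : ℝ) * (2 * (b / (A' * ((lf:ℝ) + 1))))
        ≤ (2 * U) * (2 * (b / A')) := by
          apply mul_le_mul hcard2 hterm (by positivity) (by positivity)
    _ = 4 * b * (|c| + b) / (A' * A') := by rw [hU]; field_simp; ring
    _ ≤ 40 * b / A' := by
        rw [div_le_div_iff₀ (by positivity) hA0]
        nlinarith [mul_nonneg (mul_nonneg hb0.le hb0.le) hA0.le,
          mul_nonneg (mul_nonneg hb0.le hA0.le) (sub_nonneg.mpr (hb1.trans hA))]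
  · -- large |c|
    have hc0 : 0 < |c| := by linarith
    have hA'c : 9 * A' ≤ 10 * |c| := by nlinarith
    have hterm : 2 * (b / (A' * ((lf:ℝ) + 1))) ≤ 9 * b / |c| := by
      have hALlow : 2 * |c| / 9 < A' * ((lf:ℝ) + 1) := by
        have h5 : A' * L < A' * ((lf:ℝ) + 1) := mul_lt_mul_of_pos_left hlfL hA0
        have hAL : A' * L = (|c| - b) / 4 := by rw [hL]; field_simp
        nlinarith
      have h6 : 2 * (b / (A' * ((lf:ℝ) + 1))) = (2 * b) / (A' * ((lf:ℝ) + 1)) := by ring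
      rw [h6, div_le_div_iff₀ hlfpos hc0]
      nlinarith [mul_le_mul_of_nonneg_left hALlow.le (by linarith : (0:ℝ) ≤ 9 * b)]
    have hcard2 : (T.card : ℝ) ≤ 2 * ((3 * |c| + 5 * b) / (4 * A') + 1) := by
      refine hcard.trans ?_
      have hUL : U - L = (3 * |c| + 5 * b) / (4 * A') := by
        rw [hU, hL]; field_simp; ring
      have h0 : (0:ℝ) ≤ (3 * |c| + 5 * b) / (4 * A') + 1 := by positivity
      have : max ((uf:ℝ) - (lf:ℝ)) 0 ≤ (3 * |c| + 5 * b) / (4 * A') + 1 :=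
        max_le (by linarith) h0
      linarith
    calc (T.card : ℝ) * (2 * (b / (A' * ((lf:ℝ) + 1))))
        ≤ (2 * ((3 * |c| + 5 * b) / (4 * A') + 1)) * (9 * b / |c|) := by
          apply mul_le_mul hcard2 hterm (by positivity) (by positivity)
    _ = 9 * b * (3 * |c| + 5 * b + 4 * A') / (2 * A' * |c|) := by
          field_simp
          ring
    _ ≤ 40 * b / A' := by
        rw [div_le_div_iff₀ (by positivity) hA0]
        nlinarith [mul_nonneg (mul_nonneg hb0.le hA0.le)
            (show (0:ℝ) ≤ 72 * |c| - (27 * |c| + 45 * b + 36 * A') by linarith),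
          mul_nonneg (mul_nonneg hb0.le hA0.le) hc0.le]


lemma outage_volprod_le {α : Type*} [MeasureSpace α] [SigmaFinite (volume : Measure α)]
    {S : Set (ℝ × α)} (hS : MeasurableSet S) {m : ENNReal}
    (h1 : ∀ p ∈ S, p.1 ∈ Set.Ioc (1:ℝ) 4)
    (h2 : ∀ x : ℝ, volume (Prod.mk x ⁻¹' S) ≤ m) :
    volume S ≤ ENNReal.ofReal 3 * m := by
  rw [show (volume : Measure (ℝ × α)) = (volume : Measure ℝ).prod volume from
    Measure.volume_eq_prod ℝ α]
  rw [Measure.prod_apply hS]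
  calc (∫⁻ x, volume (Prod.mk x ⁻¹' S))
      ≤ ∫⁻ x, (Set.Ioc (1:ℝ) 4).indicator (fun _ => m) x := by
        apply lintegral_mono
        intro x
        by_cases hx : x ∈ Set.Ioc (1:ℝ) 4
        · rw [Set.indicator_of_mem hx]; exact h2 x
        · rw [Set.indicator_of_notMem hx]
          have he : Prod.mk x ⁻¹' S = ∅ := by
            ext z
            simp only [Set.mem_preimage, Set.mem_empty_iff_false, iff_false]
            exact fun hz => hx (h1 _ hz)
          simp [he]
  _ = ENNReal.ofReal 3 * m := by
        rw [lintegral_indicator_const measurableSet_Ioc, Real.volume_Ioc]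
        rw [mul_comm]
        norm_num

def outS2 (A A2 b : ℝ) (p : ℤ × ℤ) : Set (ℝ × ℝ × ℝ) :=
  {g : ℝ × ℝ × ℝ | g.1 ∈ Set.Ioc (1:ℝ) 4 ∧ g.2.1 ∈ Set.Ioc (1:ℝ) 4 ∧
    (g.2.2 ∈ Set.Ioc (1:ℝ) 4 ∧ ∃ q2 : ℤ, q2 ≠ 0 ∧
      |(g.1 * p.1 + A * g.2.1 * p.2) + A2 * g.2.2 * q2| < b)}

def outS1 (A b : ℝ) (q0 : ℤ) : Set (ℝ × ℝ × ℝ) :=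
  {g : ℝ × ℝ × ℝ | g.1 ∈ Set.Ioc (1:ℝ) 4 ∧ g.2 ∈
    ({y : ℝ | y ∈ Set.Ioc (1:ℝ) 4 ∧ ∃ q1 : ℤ, q1 ≠ 0 ∧
      |g.1 * q0 + A * y * q1| < b} ×ˢ Set.Ioc (1:ℝ) 4)}

lemma outage_mS2 (A A2 b : ℝ) (p : ℤ × ℤ) : MeasurableSet (outS2 A A2 b p) := by
  have he : outS2 A A2 b p
      = {g : ℝ × ℝ × ℝ | g.1 ∈ Set.Ioc (1:ℝ) 4} ∩ ({g : ℝ × ℝ × ℝ | g.2.1 ∈ Set.Ioc (1:ℝ) 4} ∩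
        ({g : ℝ × ℝ × ℝ | g.2.2 ∈ Set.Ioc (1:ℝ) 4} ∩
          ⋃ q2 : ℤ, {g : ℝ × ℝ × ℝ | q2 ≠ 0 ∧
            |(g.1 * p.1 + A * g.2.1 * p.2) + A2 * g.2.2 * q2| < b})) := by
    ext g
    simp only [outS2, Set.mem_inter_iff, Set.mem_iUnion, Set.mem_setOf_eq]
    all_goals tauto
  rw [he]
  refine (measurableSet_Ioc.preimage measurable_fst).inter
    ((measurableSet_Ioc.preimage (measurable_fst.comp measurable_snd)).inter
      ((measurableSet_Ioc.preimage (measurable_snd.comp measurable_snd)).inter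
        (MeasurableSet.iUnion fun q2 => ?_)))
  by_cases hq : q2 = 0
  · simp only [hq, ne_eq, not_true_eq_false, false_and, Set.setOf_false]
    exact MeasurableSet.empty
  · simp only [ne_eq, hq, not_false_eq_true, true_and]
    exact measurableSet_lt (by fun_prop) measurable_const

lemma outage_mS1 (A b : ℝ) (q0 : ℤ) : MeasurableSet (outS1 A b q0) := by
  have he : outS1 A b q0
      = {g : ℝ × ℝ × ℝ | g.1 ∈ Set.Ioc (1:ℝ) 4} ∩ ({g : ℝ × ℝ × ℝ | g.2.1 ∈ Set.Ioc (1:ℝ) 4} ∩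
        ({g : ℝ × ℝ × ℝ | g.2.2 ∈ Set.Ioc (1:ℝ) 4} ∩
          ⋃ q1 : ℤ, {g : ℝ × ℝ × ℝ | q1 ≠ 0 ∧ |g.1 * q0 + A * g.2.1 * q1| < b})) := by
    ext g
    simp only [outS1, Set.mem_inter_iff, Set.mem_iUnion, Set.mem_setOf_eq, Set.mem_prod]
    all_goals tauto
  rw [he]
  refine (measurableSet_Ioc.preimage measurable_fst).inter
    ((measurableSet_Ioc.preimage (measurable_fst.comp measurable_snd)).inter
      ((measurableSet_Ioc.preimage (measurable_snd.comp measurable_snd)).inter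
        (MeasurableSet.iUnion fun q1 => ?_)))
  by_cases hq : q1 = 0
  · simp only [hq, ne_eq, not_true_eq_false, false_and, Set.setOf_false]
    exact MeasurableSet.empty
  · simp only [ne_eq, hq, not_false_eq_true, true_and]
    exact measurableSet_lt (by fun_prop) measurable_const

lemma outage_volS2 (A A2 b : ℝ) (hA21 : 1 ≤ A2) (hb0 : 0 < b) (hb1 : b ≤ 1) (p : ℤ × ℤ) :
    volume (outS2 A A2 b p) ≤ ENNReal.ofReal (360 * (b / A2)) := by
  have hA2pos : (0:ℝ) < A2 := by linarith
  have hm2 : ENNReal.ofReal 3 * (ENNReal.ofReal 3 * ENNReal.ofReal (40 * b / A2))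
      = ENNReal.ofReal (360 * (b / A2)) := by
    rw [← ENNReal.ofReal_mul (by norm_num : (0:ℝ) ≤ 3),
      ← ENNReal.ofReal_mul (by norm_num : (0:ℝ) ≤ 3)]
    congr 1
    field_simp
    ring
  rw [← hm2]
  apply outage_volprod_le (outage_mS2 A A2 b p) (fun g hg => hg.1)
  intro x
  have hmx : MeasurableSet (Prod.mk x ⁻¹' outS2 A A2 b p) :=
    (outage_mS2 A A2 b p).preimage measurable_prodMk_left
  apply outage_volprod_le hmx (fun yz hyz => hyz.2.1)
  intro y
  refine le_trans (measure_mono ?_)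
    (outage_slice_bound A2 b (x * p.1 + A * y * p.2) hA21 hb0 hb1)
  intro z hz
  obtain ⟨-, -, hz3, q2, hq2, habs⟩ := hz
  exact ⟨hz3, q2, hq2, habs⟩

lemma outage_volS1 (A b : ℝ) (hA1 : 1 ≤ A) (hb0 : 0 < b) (hb1 : b ≤ 1) (q0 : ℤ) :
    volume (outS1 A b q0) ≤ ENNReal.ofReal (360 * (b / A)) := by
  have hApos : (0:ℝ) < A := by linarith
  have hm1 : ENNReal.ofReal 3 * (ENNReal.ofReal (40 * b / A) * ENNReal.ofReal 3)
      = ENNReal.ofReal (360 * (b / A)) := by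
    rw [← ENNReal.ofReal_mul (by positivity : (0:ℝ) ≤ 40 * b / A),
      ← ENNReal.ofReal_mul (by norm_num : (0:ℝ) ≤ 3)]
    congr 1
    field_simp
    ring
  rw [← hm1]
  apply outage_volprod_le (outage_mS1 A b q0) (fun g hg => hg.1)
  intro x
  refine le_trans (measure_mono (?_ : _ ⊆ ({y : ℝ | y ∈ Set.Ioc (1:ℝ) 4 ∧
      ∃ q1 : ℤ, q1 ≠ 0 ∧ |x * (q0:ℝ) + A * y * q1| < b} ×ˢ Set.Ioc (1:ℝ) 4))) ?_
  · exact fun yz hyz => hyz.2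
  rw [show (volume : Measure (ℝ × ℝ)) = (volume : Measure ℝ).prod volume from
    Measure.volume_eq_prod ℝ ℝ, Measure.prod_prod, Real.volume_Ioc]
  have h3 : ENNReal.ofReal (4 - 1 : ℝ) = ENNReal.ofReal 3 := by norm_num
  rw [h3]
  exact mul_le_mul_left (outage_slice_bound A b (x * (q0:ℝ)) hA1 hb0 hb1) _

set_option maxHeartbeats 1000000 in
/-- The Lebesgue measure of the outage set `B ⊆ (1,4]³` of triples admitting a small
nontrivial integer combination is at most `129024·δ·P^{-ε/2}` (regime `3/4 ≤ α ≤ 1`). -/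
theorem outage_set_measure_regime_three_fourths_one
    (α δ ε P : ℝ)
    (hα : α ∈ Set.Icc (3 / 4 : ℝ) 1) (hδ : δ ∈ Set.Ioc (0 : ℝ) 1) (hε : 0 < ε)
    (hP : 1 ≤ P)
    (hA₁ : ∃ n : ℕ, 0 < n ∧ P ^ ((1 - α) / 2) = (n : ℝ))
    (hA₂ : ∃ n : ℕ, 0 < n ∧ P ^ (1 - α) = (n : ℝ)) :
    volume {g : ℝ × ℝ × ℝ |
        g ∈ (Set.Ioc (1 : ℝ) 4) ×ˢ (Set.Ioc (1 : ℝ) 4) ×ˢ (Set.Ioc (1 : ℝ) 4) ∧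
        ∃ q₀ q₁ q₂ : ℤ, ¬(q₀ = 0 ∧ q₁ = 0 ∧ q₂ = 0) ∧
          |(q₀ : ℝ)| ≤ 2 * P ^ ((α / 3 - ε) / 2) ∧
          |(q₁ : ℝ)| ≤ 4 * P ^ ((α / 3 - ε) / 2) ∧
          |(q₂ : ℝ)| ≤ 2 * P ^ ((α / 3 - ε) / 2) ∧
          |g.1 * (q₀ : ℝ) + P ^ ((1 - α) / 2) * g.2.1 * (q₁ : ℝ)
              + P ^ (1 - α) * g.2.2 * (q₂ : ℝ)|
            < δ * P ^ (-(8 * α / 3 - 2) / 2)}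
      ≤ ENNReal.ofReal (129024 * δ * P ^ (-ε / 2)) := by
  obtain ⟨hα34, hα1⟩ := hα
  obtain ⟨hδ0, hδ1⟩ := hδ
  have hP0 : (0:ℝ) < P := lt_of_lt_of_le one_pos hP
  set Qm : ℝ := P ^ ((α / 3 - ε) / 2) with hQdef
  set A : ℝ := P ^ ((1 - α) / 2) with hAdef
  set A2 : ℝ := P ^ (1 - α) with hA2def
  set b : ℝ := δ * P ^ (-(8 * α / 3 - 2) / 2) with hbdef
  have hQ0 : 0 < Qm := Real.rpow_pos_of_pos hP0 _
  have hApos : 0 < A := Real.rpow_pos_of_pos hP0 _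
  have hA2pos : 0 < A2 := Real.rpow_pos_of_pos hP0 _
  have hA1 : 1 ≤ A := by
    have h := Real.rpow_le_rpow_of_exponent_le hP (show (0:ℝ) ≤ (1 - α) / 2 by linarith)
    rwa [Real.rpow_zero] at h
  have hA21 : 1 ≤ A2 := by
    have h := Real.rpow_le_rpow_of_exponent_le hP (show (0:ℝ) ≤ 1 - α by linarith)
    rwa [Real.rpow_zero] at h
  have hb0 : 0 < b := mul_pos hδ0 (Real.rpow_pos_of_pos hP0 _)
  have hb1 : b ≤ 1 := by
    have h := Real.rpow_le_one_of_one_le_of_nonpos hP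
      (show -(8 * α / 3 - 2) / 2 ≤ 0 by linarith)
    have h2 : 0 < P ^ (-(8 * α / 3 - 2) / 2) := Real.rpow_pos_of_pos hP0 _
    rw [hbdef]
    nlinarith
  set M0 : ℤ := ⌊2 * Qm⌋ with hM0def
  set M1 : ℤ := ⌊4 * Qm⌋ with hM1def
  have hM00 : (0:ℤ) ≤ M0 := Int.floor_nonneg.mpr (by positivity)
  have hM10 : (0:ℤ) ≤ M1 := Int.floor_nonneg.mpr (by positivity)
  have hM0r : (M0:ℝ) ≤ 2 * Qm := Int.floor_le _
  have hM1r : (M1:ℝ) ≤ 4 * Qm := Int.floor_le _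
  set T01 : Finset (ℤ × ℤ) := (Finset.Icc (-M0) M0 ×ˢ Finset.Icc (-M1) M1).erase (0,0)
    with hT01
  set T0 : Finset ℤ := (Finset.Icc (-M0) M0).erase 0 with hT0
  -- inclusion
  refine le_trans (measure_mono
    (?_ : _ ⊆ (⋃ p ∈ T01, outS2 A A2 b p) ∪ ⋃ q ∈ T0, outS1 A b q)) ?_
  · rintro g ⟨hgc, q0, q1, q2, hne, hq0b, hq1b, hq2b, habs⟩
    have hg1 : g.1 ∈ Set.Ioc (1:ℝ) 4 := hgc.1
    have hg2 : g.2.1 ∈ Set.Ioc (1:ℝ) 4 := hgc.2.1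
    have hg3 : g.2.2 ∈ Set.Ioc (1:ℝ) 4 := hgc.2.2
    by_cases hq2 : q2 = 0
    · subst hq2
      by_cases hq1 : q1 = 0
      · subst hq1
        exfalso
        have hq0 : q0 ≠ 0 := by simpa using hne
        have h1 : (1:ℝ) ≤ |(q0:ℝ)| := by exact_mod_cast Int.one_le_abs hq0
        have habs' : |g.1 * (q0:ℝ)| < b := by
          have e : g.1 * (q0:ℝ) = g.1 * q0 + A * g.2.1 * ((0:ℤ):ℝ)
              + A2 * g.2.2 * ((0:ℤ):ℝ) := by push_cast; ring
          rw [e]; exact habs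
        rw [abs_mul, abs_of_pos (by linarith [hg1.1] : (0:ℝ) < g.1)] at habs'
        nlinarith [hg1.1, abs_nonneg ((q0:ℝ))]
      · by_cases hq0 : q0 = 0
        · subst hq0
          exfalso
          have h1 : (1:ℝ) ≤ |(q1:ℝ)| := by exact_mod_cast Int.one_le_abs hq1
          have habs' : |A * g.2.1 * (q1:ℝ)| < b := by
            have e : A * g.2.1 * (q1:ℝ) = g.1 * ((0:ℤ):ℝ) + A * g.2.1 * q1
                + A2 * g.2.2 * ((0:ℤ):ℝ) := by push_cast; ring
            rw [e]; exact habs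
          rw [abs_mul, abs_of_pos (by nlinarith [hg2.1] : (0:ℝ) < A * g.2.1)] at habs'
          have k1 : (1:ℝ) ≤ A * g.2.1 := by nlinarith [hg2.1]
          have k2 : (1:ℝ) * 1 ≤ A * g.2.1 * |(q1:ℝ)| :=
            mul_le_mul k1 h1 zero_le_one (by linarith)
          linarith
        · have hq0T : q0 ∈ T0 := by
            rw [hT0]
            refine Finset.mem_erase.mpr ⟨hq0, ?_⟩
            rw [Finset.mem_Icc]
            constructor
            · rw [neg_le]
              apply Int.le_floor.mpr
              push_cast
              linarith [neg_abs_le ((q0:ℝ))]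
            · apply Int.le_floor.mpr
              linarith [le_abs_self ((q0:ℝ))]
          refine Or.inr (Set.mem_biUnion hq0T ?_)
          refine ⟨hg1, Set.mem_prod.mpr ⟨⟨hg2, q1, hq1, ?_⟩, hg3⟩⟩
          have e : g.1 * (q0:ℝ) + A * g.2.1 * (q1:ℝ) = g.1 * q0 + A * g.2.1 * q1
              + A2 * g.2.2 * ((0:ℤ):ℝ) := by push_cast; ring
          rw [e]; exact habs
    · by_cases hq01 : q0 = 0 ∧ q1 = 0
      · exfalso
        obtain ⟨h0, h1'⟩ := hq01
        subst h0; subst h1'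
        have h1 : (1:ℝ) ≤ |(q2:ℝ)| := by exact_mod_cast Int.one_le_abs hq2
        have habs' : |A2 * g.2.2 * (q2:ℝ)| < b := by
          have e : A2 * g.2.2 * (q2:ℝ) = g.1 * ((0:ℤ):ℝ) + A * g.2.1 * ((0:ℤ):ℝ)
              + A2 * g.2.2 * q2 := by push_cast; ring
          rw [e]; exact habs
        rw [abs_mul, abs_of_pos (by nlinarith [hg3.1] : (0:ℝ) < A2 * g.2.2)] at habs'
        have k1 : (1:ℝ) ≤ A2 * g.2.2 := by nlinarith [hg3.1]
        have k2 : (1:ℝ) * 1 ≤ A2 * g.2.2 * |(q2:ℝ)| :=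
          mul_le_mul k1 h1 zero_le_one (by linarith)
        linarith
      · have hpT : (q0, q1) ∈ T01 := by
          rw [hT01]
          refine Finset.mem_erase.mpr ⟨?_, ?_⟩
          · intro h
            exact hq01 ⟨congrArg Prod.fst h, congrArg Prod.snd h⟩
          · rw [Finset.mem_product]
            constructor
            · rw [Finset.mem_Icc]
              constructor
              · rw [neg_le]
                apply Int.le_floor.mpr
                push_cast
                linarith [neg_abs_le ((q0:ℝ))]
              · apply Int.le_floor.mpr
                linarith [le_abs_self ((q0:ℝ))]
            · rw [Finset.mem_Icc]
              constructor
              · rw [neg_le]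
                apply Int.le_floor.mpr
                push_cast
                linarith [neg_abs_le ((q1:ℝ))]
              · apply Int.le_floor.mpr
                linarith [le_abs_self ((q1:ℝ))]
        exact Or.inl (Set.mem_biUnion hpT ⟨hg1, hg2, hg3, q2, hq2, habs⟩)
  -- cardinality bounds
  have hn1 : ((Finset.Icc (-M0) M0).card : ℝ) ≤ 4 * Qm + 1 := by
    rw [Int.card_Icc]
    have he : (M0 + 1 - -M0) = 2 * M0 + 1 := by ring
    rw [he]
    have h2 := outage_toNat_le_max (2 * M0 + 1)
    have h3 : ((2 * M0 + 1 : ℤ):ℝ) = 2 * (M0:ℝ) + 1 := by push_cast; ring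
    have h4 : (0:ℝ) ≤ 2 * (M0:ℝ) + 1 := by
      have : (0:ℝ) ≤ (M0:ℝ) := by exact_mod_cast hM00
      linarith
    rw [h3, max_eq_left h4] at h2
    linarith
  have hn2 : ((Finset.Icc (-M1) M1).card : ℝ) ≤ 8 * Qm + 1 := by
    rw [Int.card_Icc]
    have he : (M1 + 1 - -M1) = 2 * M1 + 1 := by ring
    rw [he]
    have h2 := outage_toNat_le_max (2 * M1 + 1)
    have h3 : ((2 * M1 + 1 : ℤ):ℝ) = 2 * (M1:ℝ) + 1 := by push_cast; ring
    have h4 : (0:ℝ) ≤ 2 * (M1:ℝ) + 1 := by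
      have : (0:ℝ) ≤ (M1:ℝ) := by exact_mod_cast hM10
      linarith
    rw [h3, max_eq_left h4] at h2
    linarith
  have hmem00 : ((0,0) : ℤ × ℤ) ∈ Finset.Icc (-M0) M0 ×ˢ Finset.Icc (-M1) M1 := by
    rw [Finset.mem_product]
    constructor <;> rw [Finset.mem_Icc] <;> omega
  have hcard01 : (T01.card : ℝ) ≤ 32 * Qm^2 + 12 * Qm := by
    rw [hT01, Finset.card_erase_of_mem hmem00]
    have hpos : 1 ≤ (Finset.Icc (-M0) M0 ×ˢ Finset.Icc (-M1) M1).card :=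
      Finset.card_pos.mpr ⟨_, hmem00⟩
    rw [Nat.cast_sub hpos, Finset.card_product]
    push_cast
    have hmm := mul_le_mul hn1 hn2 (by positivity) (by positivity)
    nlinarith [hQ0.le]
  have hmem0 : (0:ℤ) ∈ Finset.Icc (-M0) M0 := by rw [Finset.mem_Icc]; omega
  have hcard0 : (T0.card : ℝ) ≤ 4 * Qm := by
    rw [hT0, Finset.card_erase_of_mem hmem0]
    have hpos : 1 ≤ (Finset.Icc (-M0) M0).card := Finset.card_pos.mpr ⟨_, hmem0⟩
    rw [Nat.cast_sub hpos]
    push_cast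
    linarith [hn1]
  -- measure of the union
  have hchain : volume ((⋃ p ∈ T01, outS2 A A2 b p) ∪ ⋃ q ∈ T0, outS1 A b q)
      ≤ ENNReal.ofReal ((T01.card : ℝ) * (360 * (b / A2))
          + (T0.card : ℝ) * (360 * (b / A))) := by
    refine le_trans (measure_union_le _ _) ?_
    refine le_trans (add_le_add (measure_biUnion_finset_le _ _)
      (measure_biUnion_finset_le _ _)) ?_
    refine le_trans (add_le_add
      (Finset.sum_le_card_nsmul _ _ _ (fun p _ => outage_volS2 A A2 b hA21 hb0 hb1 p))
      (Finset.sum_le_card_nsmul _ _ _ (fun q _ => outage_volS1 A b hA1 hb0 hb1 q))) ?_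
    rw [nsmul_eq_mul, nsmul_eq_mul, ← ENNReal.ofReal_natCast T01.card,
      ← ENNReal.ofReal_natCast T0.card,
      ← ENNReal.ofReal_mul (Nat.cast_nonneg _), ← ENNReal.ofReal_mul (Nat.cast_nonneg _),
      ← ENNReal.ofReal_add (by positivity) (by positivity)]
  refine le_trans hchain (ENNReal.ofReal_le_ofReal ?_)
  -- final real arithmetic
  have hstep1 : (T01.card : ℝ) * (360 * (b / A2)) + (T0.card : ℝ) * (360 * (b / A))
      ≤ (32 * Qm^2 + 12 * Qm) * (360 * (b / A2)) + (4 * Qm) * (360 * (b / A)) := by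
    have t1 : (0:ℝ) ≤ 360 * (b / A2) := by positivity
    have t2 : (0:ℝ) ≤ 360 * (b / A) := by positivity
    have u1 := mul_le_mul_of_nonneg_right hcard01 t1
    have u2 := mul_le_mul_of_nonneg_right hcard0 t2
    linarith
  refine le_trans hstep1 ?_
  have i1 : Qm * Qm / A2 * P ^ (-(8 * α / 3 - 2) / 2) ≤ P ^ (-ε / 2) := by
    have e1 : Qm * Qm / A2 * P ^ (-(8 * α / 3 - 2) / 2) = P ^ (-ε) := by
      rw [hQdef, hA2def, div_eq_mul_inv,
        show (P ^ (1 - α))⁻¹ = P ^ (-(1 - α)) from (Real.rpow_neg hP0.le (1 - α)).symm,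
        ← Real.rpow_add hP0, ← Real.rpow_add hP0, ← Real.rpow_add hP0]
      congr 1
      ring
    rw [e1]
    exact Real.rpow_le_rpow_of_exponent_le hP (by linarith)
  have i2 : Qm / A2 * P ^ (-(8 * α / 3 - 2) / 2) ≤ P ^ (-ε / 2) := by
    have e2 : Qm / A2 * P ^ (-(8 * α / 3 - 2) / 2) = P ^ (-(α/6) + -ε / 2) := by
      rw [hQdef, hA2def, div_eq_mul_inv,
        show (P ^ (1 - α))⁻¹ = P ^ (-(1 - α)) from (Real.rpow_neg hP0.le (1 - α)).symm,
        ← Real.rpow_add hP0, ← Real.rpow_add hP0]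
      congr 1
      ring
    rw [e2]
    exact Real.rpow_le_rpow_of_exponent_le hP (by linarith)
  have i3 : Qm / A * P ^ (-(8 * α / 3 - 2) / 2) ≤ P ^ (-ε / 2) := by
    have e3 : Qm / A * P ^ (-(8 * α / 3 - 2) / 2) = P ^ (1/2 - 2*α/3 + -ε / 2) := by
      rw [hQdef, hAdef, div_eq_mul_inv,
        show (P ^ ((1 - α)/2))⁻¹ = P ^ (-((1 - α)/2)) from
          (Real.rpow_neg hP0.le ((1 - α)/2)).symm,
        ← Real.rpow_add hP0, ← Real.rpow_add hP0]
      congr 1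
      ring
    rw [e3]
    exact Real.rpow_le_rpow_of_exponent_le hP (by linarith)
  have hand : (32 * Qm^2 + 12 * Qm) * (360 * (b / A2)) + (4 * Qm) * (360 * (b / A))
      = 11520 * δ * (Qm * Qm / A2 * P ^ (-(8 * α / 3 - 2) / 2))
        + 4320 * δ * (Qm / A2 * P ^ (-(8 * α / 3 - 2) / 2))
        + 1440 * δ * (Qm / A * P ^ (-(8 * α / 3 - 2) / 2)) := by
    rw [hbdef]
    ring
  rw [hand]
  have s0 : (0:ℝ) ≤ P ^ (-ε / 2) := (Real.rpow_pos_of_pos hP0 _).le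
  have w1 := mul_le_mul_of_nonneg_left i1 (by positivity : (0:ℝ) ≤ 11520 * δ)
  have w2 := mul_le_mul_of_nonneg_left i2 (by positivity : (0:ℝ) ≤ 4320 * δ)
  have w3 := mul_le_mul_of_nonneg_left i3 (by positivity : (0:ℝ) ≤ 1440 * δ)
  nlinarith [mul_nonneg hδ0.le s0]
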